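/- Let z > 1 be an integer, let Q be the z×z grid graph, and let U be its top row. Then for every partition (X,Y) of the vertex set of Q into two disjoint sets, the number of edges of Q having one endpoint in X and the other endpoint in Y is at least min(|U ∩ X|, |U ∩ Y|). -/

import Mathlib

/-- The `z × z` grid graph: vertices `(i,j)` with `0 ≤ i,j < z` (0-indexed), and an edge
between `(i,j)` and `(i',j')` iff `|i-i'| + |j-j'| = 1`. -/
def gridGraph (z : ℕ) : SimpleGraph (Fin z × Fin z) where
  Adj a b := ((a.1 : ℤ) - (b.1 : ℤ)).natAbs + ((a.2 : ℤ) - (b.2 : ℤ)).natAbs = 1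
  symm := by constructor; intro a b h; omega
  loopless := by constructor; intro a h; simp at h

instance (z : ℕ) : DecidableRel (gridGraph z).Adj := fun a b =>
  inferInstanceAs (Decidable (((a.1 : ℤ) - (b.1 : ℤ)).natAbs + ((a.2 : ℤ) - (b.2 : ℤ)).natAbs = 1))

lemma switch_aux (g : ℕ → Bool) : ∀ n m, m ≤ n → g m ≠ g n →
    ∃ k, m ≤ k ∧ k + 1 ≤ n ∧ g k ≠ g (k + 1) := by
  intro n
  induction n with
  | zero =>
    intro m hm h
    have : m = 0 := Nat.le_zero.mp hm
    exact absurd rfl (this ▸ h)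
  | succ n ih =>
    intro m hm h
    by_cases hgn : g n = g (n + 1)
    · have hm' : m ≤ n := by
        rcases Nat.lt_succ_iff_lt_or_eq.mp (Nat.lt_succ_of_le hm) with h' | h'
        · omega
        · exact absurd (congrArg g h') h
      obtain ⟨k, h1, h2, h3⟩ := ih m hm' (by rw [← hgn] at h; exact h)
      exact ⟨k, h1, by omega, h3⟩
    · have hm' : m ≤ n := by
        by_contra hc
        have : m = n + 1 := by omega
        exact h (by rw [this])
      exact ⟨n, hm', le_refl _, hgn⟩

lemma exists_cut_on_line {z : ℕ} (X Y : Finset (Fin z × Fin z))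
    (hcov : ∀ v, v ∈ X ∨ v ∈ Y) (hdisj : Disjoint X Y)
    (f : Fin z → Fin z × Fin z)
    (hadj : ∀ a b : Fin z, (a : ℕ) + 1 = (b : ℕ) → (gridGraph z).Adj (f a) (f b))
    (u v : Fin z) (hu : f u ∈ X) (hv : f v ∈ Y) :
    ∃ a b : Fin z, (f a, f b) ∈ (X ×ˢ Y).filter fun p => (gridGraph z).Adj p.1 p.2 := by
  classical
  set g : ℕ → Bool := fun k => if h : k < z then decide (f ⟨k, h⟩ ∈ X) else true with hg
  have hfvX : f v ∉ X := fun hc => (Finset.disjoint_left.mp hdisj hc) hv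
  have hgu : g (u : ℕ) = true := by simp [hg, u.isLt, hu]
  have hgv : g (v : ℕ) = false := by simp [hg, v.isLt, hfvX]
  have hkey : ∀ k, k + 1 < z → g k ≠ g (k + 1) →
      ∃ a b : Fin z, (f a, f b) ∈ (X ×ˢ Y).filter fun p => (gridGraph z).Adj p.1 p.2 := by
    intro k hk hne
    have hk' : k < z := by omega
    set a : Fin z := ⟨k, hk'⟩
    set b : Fin z := ⟨k + 1, hk⟩
    have hga : g k = decide (f a ∈ X) := by simp [hg, hk']; exact Iff.rfl
    have hgb : g (k + 1) = decide (f b ∈ X) := by simp [hg, hk]; exact Iff.rfl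
    have hadj' := hadj a b rfl
    by_cases hfa : f a ∈ X
    · have hfb : f b ∉ X := by
        intro hc; apply hne; rw [hga, hgb]; simp [hfa, hc]
      have hfbY : f b ∈ Y := (hcov (f b)).resolve_left hfb
      exact ⟨a, b, Finset.mem_filter.mpr ⟨Finset.mem_product.mpr ⟨hfa, hfbY⟩, hadj'⟩⟩
    · have hfb : f b ∈ X := by
        by_contra hc; apply hne; rw [hga, hgb]; simp [hfa, hc]
      have hfaY : f a ∈ Y := (hcov (f a)).resolve_left hfa
      exact ⟨b, a, Finset.mem_filter.mpr ⟨Finset.mem_product.mpr ⟨hfb, hfaY⟩, hadj'.symm⟩⟩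
  rcases le_total (u : ℕ) (v : ℕ) with hle | hle
  · obtain ⟨k, h1, h2, h3⟩ := switch_aux g (v : ℕ) (u : ℕ) hle (by rw [hgu, hgv]; simp)
    exact hkey k (by have := v.isLt; omega) h3
  · obtain ⟨k, h1, h2, h3⟩ := switch_aux g (u : ℕ) (v : ℕ) hle (by rw [hgu, hgv]; simp)
    exact hkey k (by have := u.isLt; omega) h3

lemma card_le_of_cut {α β : Type*} [DecidableEq β] (S : Finset α) (cut : Finset β)
    (r : α → β → Prop) (junk : β)
    (h : ∀ a ∈ S, ∃ b, b ∈ cut ∧ r a b)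
    (hinj : ∀ a₁ ∈ S, ∀ a₂ ∈ S, ∀ b, r a₁ b → r a₂ b → a₁ = a₂) :
    S.card ≤ cut.card := by
  classical
  set F : α → β := fun a => if h' : ∃ b, b ∈ cut ∧ r a b then h'.choose else junk with hF
  apply Finset.card_le_card_of_injOn F
  · intro a ha
    have h' := h a ha
    simp only [hF, dif_pos h']
    exact h'.choose_spec.1
  · intro a₁ ha₁ a₂ ha₂ heq
    have h₁ := h a₁ (Finset.mem_coe.mp ha₁)
    have h₂ := h a₂ (Finset.mem_coe.mp ha₂)
    simp only [hF, dif_pos h₁, dif_pos h₂] at heq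
    exact hinj a₁ ha₁ a₂ ha₂ h₁.choose (h₁.choose_spec.2) (heq ▸ h₂.choose_spec.2)

theorem stmt_5 (z : ℕ) (hz : 1 < z) (X Y : Finset (Fin z × Fin z))
    (hdisj : Disjoint X Y) (hunion : X ∪ Y = Finset.univ) :
    min ((Finset.univ.filter fun v : Fin z × Fin z => (v.1 : ℕ) = 0) ∩ X).card
        ((Finset.univ.filter fun v : Fin z × Fin z => (v.1 : ℕ) = 0) ∩ Y).card
      ≤ ((X ×ˢ Y).filter fun p => (gridGraph z).Adj p.1 p.2).card := by
  classical
  have hz0 : 0 < z := by omega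
  have hcov : ∀ v, v ∈ X ∨ v ∈ Y := by
    intro v
    have : v ∈ X ∪ Y := hunion ▸ Finset.mem_univ v
    exact Finset.mem_union.mp this
  set cut := (X ×ˢ Y).filter fun p => (gridGraph z).Adj p.1 p.2 with hcut
  have hjunk : ((⟨0, hz0⟩ : Fin z), (⟨0, hz0⟩ : Fin z)) = ((⟨0,hz0⟩, ⟨0,hz0⟩) : (Fin z × Fin z)) := rfl
  -- vertical adjacency on column j
  have vadj : ∀ j : Fin z, ∀ a b : Fin z, (a : ℕ) + 1 = (b : ℕ) →
      (gridGraph z).Adj ((a, j)) ((b, j)) := by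
    intro j a b hab
    show ((a : ℤ) - (b : ℤ)).natAbs + ((j : ℤ) - (j : ℤ)).natAbs = 1
    omega
  have hadjrow : ∀ i : Fin z, ∀ a b : Fin z, (a : ℕ) + 1 = (b : ℕ) →
      (gridGraph z).Adj ((i, a)) ((i, b)) := by
    intro i a b hab
    show ((i : ℤ) - (i : ℤ)).natAbs + ((a : ℤ) - (b : ℤ)).natAbs = 1
    omega
  by_cases hX : ∀ j : Fin z, ∃ i : Fin z, (i, j) ∈ Y
  · -- every column has a Y vertex: one vertical cut edge per column whose top is in X
    refine le_trans (min_le_left _ _) ?_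
    apply card_le_of_cut _ cut (fun v p => p.1.2 = v.2) (((⟨0,hz0⟩,⟨0,hz0⟩),(⟨0,hz0⟩,⟨0,hz0⟩)))
    · intro v hv
      obtain ⟨hvU, hvX⟩ := Finset.mem_inter.mp hv
      obtain ⟨i, hi⟩ := hX v.2
      have hv0 : (v.1 : ℕ) = 0 := (Finset.mem_filter.mp hvU).2
      have hu : ((fun a : Fin z => ((a, v.2) : Fin z × Fin z)) v.1) ∈ X := by
        simpa using hvX
      obtain ⟨a, b, hmem⟩ := exists_cut_on_line X Y hcov hdisj
        (fun a => (a, v.2)) (vadj v.2) v.1 i hu hi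
      exact ⟨((a, v.2), (b, v.2)), hmem, rfl⟩
    · intro v₁ hv₁ v₂ hv₂ p h₁ h₂
      obtain ⟨hU₁, _⟩ := Finset.mem_inter.mp hv₁
      obtain ⟨hU₂, _⟩ := Finset.mem_inter.mp hv₂
      have e1 : (v₁.1 : ℕ) = 0 := (Finset.mem_filter.mp hU₁).2
      have e2 : (v₂.1 : ℕ) = 0 := (Finset.mem_filter.mp hU₂).2
      have : v₁.2 = v₂.2 := by rw [← h₁, ← h₂]
      exact Prod.ext (Fin.ext (by omega)) this
  · push_neg at hX
    obtain ⟨jx, hjx⟩ := hX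
    have hjxX : ∀ i : Fin z, (i, jx) ∈ X := fun i => (hcov (i, jx)).resolve_right (hjx i)
    by_cases hY : ∀ j : Fin z, ∃ i : Fin z, (i, j) ∈ X
    · refine le_trans (min_le_right _ _) ?_
      apply card_le_of_cut _ cut (fun v p => p.1.2 = v.2) (((⟨0,hz0⟩,⟨0,hz0⟩),(⟨0,hz0⟩,⟨0,hz0⟩)))
      · intro v hv
        obtain ⟨hvU, hvY⟩ := Finset.mem_inter.mp hv
        obtain ⟨i, hi⟩ := hY v.2
        have hv' : ((fun a : Fin z => ((a, v.2) : Fin z × Fin z)) v.1) ∈ Y := by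
          simpa using hvY
        obtain ⟨a, b, hmem⟩ := exists_cut_on_line X Y hcov hdisj
          (fun a => (a, v.2)) (vadj v.2) i v.1 hi hv'
        exact ⟨((a, v.2), (b, v.2)), hmem, rfl⟩
      · intro v₁ hv₁ v₂ hv₂ p h₁ h₂
        obtain ⟨hU₁, _⟩ := Finset.mem_inter.mp hv₁
        obtain ⟨hU₂, _⟩ := Finset.mem_inter.mp hv₂
        have e1 : (v₁.1 : ℕ) = 0 := (Finset.mem_filter.mp hU₁).2
        have e2 : (v₂.1 : ℕ) = 0 := (Finset.mem_filter.mp hU₂).2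
        have : v₁.2 = v₂.2 := by rw [← h₁, ← h₂]
        exact Prod.ext (Fin.ext (by omega)) this
    · push_neg at hY
      obtain ⟨jy, hjy⟩ := hY
      have hjyY : ∀ i : Fin z, (i, jy) ∈ Y := fun i => (hcov (i, jy)).resolve_left (hjy i)
      -- every row has a cut edge, so cut.card ≥ z
      have hzle : z ≤ cut.card := by
        have := card_le_of_cut (Finset.univ : Finset (Fin z)) cut
          (fun i p => p.1.1 = i) (((⟨0,hz0⟩,⟨0,hz0⟩),(⟨0,hz0⟩,⟨0,hz0⟩)))
          (fun i _ => by
            obtain ⟨a, b, hmem⟩ := exists_cut_on_line X Y hcov hdisj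
              (fun a => (i, a)) (hadjrow i) jx jy (hjxX i) (hjyY i)
            exact ⟨((i, a), (i, b)), hmem, rfl⟩)
          (fun i₁ _ i₂ _ p h₁ h₂ => by rw [← h₁, ← h₂])
        simpa using this
      refine le_trans (min_le_left _ _) (le_trans ?_ hzle)
      calc ((Finset.univ.filter fun v : Fin z × Fin z => (v.1 : ℕ) = 0) ∩ X).card
          ≤ (Finset.univ : Finset (Fin z)).card := by
            apply Finset.card_le_card_of_injOn (fun v => v.2)
            · intro a _; exact Finset.mem_univ _
            · intro v₁ hv₁ v₂ hv₂ heq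
              obtain ⟨hU₁, _⟩ := Finset.mem_inter.mp (Finset.mem_coe.mp hv₁)
              obtain ⟨hU₂, _⟩ := Finset.mem_inter.mp (Finset.mem_coe.mp hv₂)
              have e1 : (v₁.1 : ℕ) = 0 := (Finset.mem_filter.mp hU₁).2
              have e2 : (v₂.1 : ℕ) = 0 := (Finset.mem_filter.mp hU₂).2
              exact Prod.ext (Fin.ext (by omega)) heq
        _ = z := by simp
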